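/- arXiv:0805.4253 — 4 statements merged into one kernel-verified Lean document; each statement's English description precedes it below -/
import Mathlib

section
/- Let F be the free group on two generators x and y, and let φ : F → F be the homomorphism determined by φ(x) = [[y,x],x] and φ(y) = [[y,x],y], where [a,b] = a b a⁻¹ b⁻¹. Then φ is injective, and for every i ≥ 1 one has φ(F_i) ⊆ F_{i+1}; in particular, the induced map F_i/F_{i+1} → F_i/F_{i+1} on each graded quotient of the lower central series is the zero map. -/
open scoped commutatorElement

namespace ZeroLieAux

open FreeGroup List

abbrev W := List (Bool × Bool)

/-- A word is reduced: no adjacent cancelling pair. -/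
def Rd (L : W) : Prop := List.Chain' (fun p q => ¬(p.1 = q.1 ∧ p.2 = !q.2)) L

lemma rd_reduce {L : W} (h : Rd L) : FreeGroup.reduce L = L := by
  induction L with
  | nil => rfl
  | cons x L ih =>
    have hL : Rd L := h.tail
    rw [FreeGroup.reduce.cons, ih hL]
    cases L with
    | nil => rfl
    | cons y t =>
      have hxy : ¬(x.1 = y.1 ∧ x.2 = !y.2) := (List.isChain_cons_cons.mp h).1
      simp only [hxy, if_false]

lemma reduce_rd (L : W) : Rd (FreeGroup.reduce L) := by
  induction L with
  | nil => exact List.isChain_nil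
  | cons x L ih =>
    rw [FreeGroup.reduce.cons]
    rcases hL : FreeGroup.reduce L with _ | ⟨y, t⟩
    · exact List.isChain_singleton x
    · rw [hL] at ih
      by_cases hc : x.1 = y.1 ∧ x.2 = !y.2
      · simp only [hc, and_self, if_true]
        exact ih.tail
      · simp only [hc, if_false]
        exact List.isChain_cons_cons.mpr ⟨hc, ih⟩

lemma rd_toWord (g : FreeGroup Bool) : Rd g.toWord := by
  rw [← FreeGroup.reduce_toWord]
  exact reduce_rd _

lemma invRev_append (L₁ L₂ : W) :
    FreeGroup.invRev (L₁ ++ L₂) = FreeGroup.invRev L₂ ++ FreeGroup.invRev L₁ := by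
  simp [FreeGroup.invRev]

/-- Splitting lemma: multiplying two reduced words cancels a suffix of the first
against a matching prefix of the second, and concatenates the rest. -/
lemma rd_split : ∀ L₁ L₂ : W, Rd L₁ → Rd L₂ →
    ∃ L₁' c L₂', L₁ = L₁' ++ c ∧ L₂ = FreeGroup.invRev c ++ L₂' ∧
      FreeGroup.reduce (L₁ ++ L₂) = L₁' ++ L₂' := by
  intro L₁
  induction L₁ using List.reverseRecOn with
  | nil =>
    intro L₂ _ h2
    exact ⟨[], [], L₂, by simp, by simp [FreeGroup.invRev], by simpa using rd_reduce h2⟩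
  | append_singleton M a ih =>
    intro L₂ h1 h2
    have hjunction := List.isChain_append.mp (h1 : List.Chain' _ (M ++ [a]))
    rcases L₂ with _ | ⟨b, N⟩
    · exact ⟨M ++ [a], [], [], by simp, by simp [FreeGroup.invRev],
        by rw [List.append_nil]; exact rd_reduce h1⟩
    · by_cases hb : b = (a.1, !a.2)
      · obtain ⟨M', c, N', hM, hN, hred⟩ := ih N hjunction.1 h2.tail
        refine ⟨M', c ++ [a], N', by rw [hM, List.append_assoc], ?_, ?_⟩
        · rw [invRev_append, hN, hb]
          simp [FreeGroup.invRev]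
        · have step : FreeGroup.Red.Step ((M ++ [a]) ++ b :: N) (M ++ N) := by
            subst hb
            simpa using @FreeGroup.Red.Step.not Bool M N a.1 a.2
          rw [FreeGroup.reduce.Step.eq step, hred]
      · refine ⟨M ++ [a], [], b :: N, by simp, by simp [FreeGroup.invRev], ?_⟩
        apply rd_reduce
        refine List.isChain_append.mpr ⟨h1, h2, ?_⟩
        intro p hp q hq
        rw [List.getLast?_concat] at hp
        simp only [List.head?_cons, Option.mem_def, Option.some.injEq] at hp hq
        subst hp; subst hq
        rintro ⟨hh1, hh2⟩
        exact hb (Prod.ext hh1.symm (by rw [hh2, Bool.not_not]))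

lemma toWord_mul (g w : FreeGroup Bool) :
    (g * w).toWord = FreeGroup.reduce (g.toWord ++ w.toWord) := by
  conv_lhs => rw [← FreeGroup.mk_toWord (x := g), ← FreeGroup.mk_toWord (x := w)]
  rw [FreeGroup.mul_mk, FreeGroup.toWord_mk]

/-- Key cancellation lemma for the ping-pong argument. -/
lemma key (g w : FreeGroup Bool) (h7 : 7 ≤ g.toWord.length)
    (h : ¬ ((g⁻¹.toWord.take 4) <+: w.toWord)) :
    (g.toWord.take 4) <+: (g * w).toWord := by
  obtain ⟨L₁', c, L₂', h1, h2, hred⟩ :=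
    rd_split g.toWord w.toWord (rd_toWord g) (rd_toWord w)
  rw [toWord_mul, hred]
  by_cases hc : c.length ≤ 3
  · have hlen : 4 ≤ L₁'.length := by
      have := congrArg List.length h1
      simp only [List.length_append] at this
      omega
    have htake : g.toWord.take 4 = L₁'.take 4 := by
      rw [h1, List.take_append]
      have h0 : 4 - L₁'.length = 0 := by omega
      rw [h0]
      simp
    rw [htake]
    exact (List.take_prefix 4 L₁').trans (List.prefix_append _ _)
  · exfalso
    apply h
    have h4c : 4 ≤ (FreeGroup.invRev c).length := by
      rw [FreeGroup.invRev_length]; omega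
    have hinv : g⁻¹.toWord = FreeGroup.invRev c ++ FreeGroup.invRev L₁' := by
      rw [FreeGroup.toWord_inv, h1, invRev_append]
    have htake : g⁻¹.toWord.take 4 = (FreeGroup.invRev c).take 4 := by
      rw [hinv, List.take_append]
      have h0 : 4 - (FreeGroup.invRev c).length = 0 := by omega
      rw [h0]
      simp
    rw [htake, h2]
    exact (List.take_prefix _ _).trans (List.prefix_append _ _)

noncomputable section

def A : FreeGroup Bool := ⁅⁅FreeGroup.of true, FreeGroup.of false⁆, FreeGroup.of false⁆
def B : FreeGroup Bool := ⁅⁅FreeGroup.of true, FreeGroup.of false⁆, FreeGroup.of true⁆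

def gen : Bool → FreeGroup Bool := fun i => bif i then B else A

def P (i : Bool) : W := (gen i).toWord.take 4
def Q (i : Bool) : W := ((gen i)⁻¹).toWord.take 4

def X (i : Bool) : Set (FreeGroup Bool) := {w | P i <+: w.toWord}
def Y (i : Bool) : Set (FreeGroup Bool) := {w | Q i <+: w.toWord}

lemma pref_eq {p q : W} {L : W} (hp : p <+: L) (hq : q <+: L)
    (h4p : p.length = 4) (h4q : q.length = 4) : p = q := by
  rw [List.prefix_iff_eq_take] at hp hq
  rw [hp, hq, h4p, h4q]

lemma lenP (i : Bool) : (P i).length = 4 := by cases i <;> decide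
lemma lenQ (i : Bool) : (Q i).length = 4 := by cases i <;> decide

lemma gen_injective : Function.Injective (FreeGroup.lift gen) := by
  apply FreeGroup.injective_lift_of_ping_pong gen X Y
  · -- nonempty
    intro i
    refine ⟨FreeGroup.mk (P i), ?_⟩
    show P i <+: (FreeGroup.mk (P i)).toWord
    rw [FreeGroup.toWord_mk]
    have : FreeGroup.reduce (P i) = P i := by cases i <;> decide
    rw [this]
  · -- X pairwise disjoint
    intro i j hij
    show Disjoint (X i) (X j)
    rw [Set.disjoint_left]
    intro w hwi hwj
    have := pref_eq (hwi : P i <+: w.toWord) (hwj : P j <+: w.toWord) (lenP i) (lenP j)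
    revert hij this
    cases i <;> cases j <;> decide
  · -- Y pairwise disjoint
    intro i j hij
    show Disjoint (Y i) (Y j)
    rw [Set.disjoint_left]
    intro w hwi hwj
    have := pref_eq (hwi : Q i <+: w.toWord) (hwj : Q j <+: w.toWord) (lenQ i) (lenQ j)
    revert hij this
    cases i <;> cases j <;> decide
  · -- X vs Y disjoint
    intro i j
    rw [Set.disjoint_left]
    intro w hwi hwj
    have := pref_eq (hwi : P i <+: w.toWord) (hwj : Q j <+: w.toWord) (lenP i) (lenQ j)
    revert this
    cases i <;> cases j <;> decide
  · -- ping
    intro i z hz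
    rw [Set.mem_smul_set] at hz
    obtain ⟨z', hz', rfl⟩ := hz
    have h7 : 7 ≤ (gen i).toWord.length := by cases i <;> decide
    have hkey := key (gen i) z' h7 hz'
    rw [smul_eq_mul]
    exact hkey
  · -- pong
    intro i z hz
    rw [Set.mem_smul_set] at hz
    obtain ⟨z', hz', rfl⟩ := hz
    have h7 : 7 ≤ ((gen i)⁻¹).toWord.length := by cases i <;> decide
    have hnp : ¬ (((gen i)⁻¹⁻¹).toWord.take 4 <+: z'.toWord) := by
      rw [inv_inv]
      exact hz'
    have hkey := key ((gen i)⁻¹) z' h7 hnp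
    rw [Pi.inv_apply, smul_eq_mul]
    exact hkey

end

end ZeroLieAux

/-- Let `F` be the free group on two generators `x, y` and let
`φ : F → F` be the homomorphism with `φ(x) = [[y,x],x]` and `φ(y) = [[y,x],y]`.
Then `φ` is injective and `φ(F_i) ⊆ F_{i+1}` for all `i ≥ 1`; in particular the
induced map on each graded quotient of the lower central series is zero. -/
theorem injective_hom_inducing_zero_on_lie_ring :
    ∀ φ : FreeGroup Bool →* FreeGroup Bool,
      φ (FreeGroup.of false) =
          ⁅⁅FreeGroup.of true, FreeGroup.of false⁆, FreeGroup.of false⁆ →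
      φ (FreeGroup.of true) =
          ⁅⁅FreeGroup.of true, FreeGroup.of false⁆, FreeGroup.of true⁆ →
      Function.Injective φ ∧
        ∀ i : ℕ, Subgroup.map φ ((⊤ : Subgroup (FreeGroup Bool)).lowerCentralSeries i) ≤
          (⊤ : Subgroup (FreeGroup Bool)).lowerCentralSeries (i + 1) := by
  intro φ hf ht
  have hφ : φ = FreeGroup.lift ZeroLieAux.gen := by
    apply FreeGroup.ext_hom
    intro b
    cases b
    · rw [hf, FreeGroup.lift_apply_of]; rfl
    · rw [ht, FreeGroup.lift_apply_of]; rfl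
  constructor
  · rw [hφ]
    exact ZeroLieAux.gen_injective
  · -- range of φ lands in the commutator subgroup
    have hgen : ∀ b : Bool, φ (FreeGroup.of b) ∈ (⊤ : Subgroup (FreeGroup Bool)).lowerCentralSeries 1 := by
      intro b
      rw [Subgroup.top_lowerCentralSeries_one]
      cases b
      · rw [hf]
        exact Subgroup.commutator_mem_commutator (Subgroup.mem_top _) (Subgroup.mem_top _)
      · rw [ht]
        exact Subgroup.commutator_mem_commutator (Subgroup.mem_top _) (Subgroup.mem_top _)
    have hrange : Subgroup.map φ ⊤ ≤ (⊤ : Subgroup (FreeGroup Bool)).lowerCentralSeries 1 := by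
      rw [← FreeGroup.closure_range_of Bool, MonoidHom.map_closure, Subgroup.closure_le]
      rintro _ ⟨_, ⟨b, rfl⟩, rfl⟩
      rw [FreeGroup.closure_range_of]
      exact hgen b
    intro i
    induction i with
    | zero =>
      rw [Subgroup.lowerCentralSeries_zero]
      exact hrange
    | succ n ih =>
      have hsucc : ∀ m : ℕ, (⊤ : Subgroup (FreeGroup Bool)).lowerCentralSeries (m + 1) =
          ⁅(⊤ : Subgroup (FreeGroup Bool)).lowerCentralSeries m, (⊤ : Subgroup (FreeGroup Bool))⁆ :=
        fun m => rfl
      rw [hsucc n, Subgroup.map_commutator]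
      calc ⁅Subgroup.map φ ((⊤ : Subgroup (FreeGroup Bool)).lowerCentralSeries n), Subgroup.map φ ⊤⁆
          ≤ ⁅(⊤ : Subgroup (FreeGroup Bool)).lowerCentralSeries (n + 1), ⊤⁆ :=
            Subgroup.commutator_mono ih le_top
        _ = (⊤ : Subgroup (FreeGroup Bool)).lowerCentralSeries (n + 2) := (hsucc (n + 1)).symm
end

section
/- Let g ≥ 1 and let F be the free group on the 2g generators a₁, …, a_g, b₁, …, b_g. Then the element w = [[a₁,b₁][a₂,b₂]⋯[a_g,b_g], b_g] (where [a,b] = a b a⁻¹ b⁻¹) lies in the third term F₃ of the lower central series of F but does not lie in the fourth term F₄. (This element is t_*(b_g)·b_g⁻¹ for the Dehn twist t about a curve parallel to the boundary of a genus-g surface with one boundary component, and shows that [t] ∉ 𝒥(4).) -/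
open scoped commutatorElement

/-- A model of the free class-3 nilpotent-ish group: unitriangular 4×4 integer
matrices with equal (2,3) and (3,4) entries, encoded by five integers. -/
structure N3 where
  a : ℤ
  b : ℤ
  c : ℤ
  d : ℤ
  e : ℤ

namespace N3

@[ext] theorem ext' {x y : N3} (h1 : x.a = y.a) (h2 : x.b = y.b) (h3 : x.c = y.c)
    (h4 : x.d = y.d) (h5 : x.e = y.e) : x = y := by
  cases x; cases y; simp_all

instance : Mul N3 :=
  ⟨fun x y => ⟨x.a + y.a, x.b + y.b, x.c + y.c + x.a * y.b,
    x.d + y.d + x.a * y.e + x.c * y.b, x.e + y.e + x.b * y.b⟩⟩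

instance : One N3 := ⟨⟨0, 0, 0, 0, 0⟩⟩

instance : Inv N3 :=
  ⟨fun x => ⟨-x.a, -x.b, x.a * x.b - x.c,
    -x.d + x.a * x.e - x.a * x.b ^ 2 + x.c * x.b, x.b ^ 2 - x.e⟩⟩

@[simp] theorem mul_a (x y : N3) : (x * y).a = x.a + y.a := rfl
@[simp] theorem mul_b (x y : N3) : (x * y).b = x.b + y.b := rfl
@[simp] theorem mul_c (x y : N3) : (x * y).c = x.c + y.c + x.a * y.b := rfl
@[simp] theorem mul_d (x y : N3) : (x * y).d = x.d + y.d + x.a * y.e + x.c * y.b := rfl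
@[simp] theorem mul_e (x y : N3) : (x * y).e = x.e + y.e + x.b * y.b := rfl
@[simp] theorem one_a : (1 : N3).a = 0 := rfl
@[simp] theorem one_b : (1 : N3).b = 0 := rfl
@[simp] theorem one_c : (1 : N3).c = 0 := rfl
@[simp] theorem one_d : (1 : N3).d = 0 := rfl
@[simp] theorem one_e : (1 : N3).e = 0 := rfl
@[simp] theorem inv_a (x : N3) : (x⁻¹).a = -x.a := rfl
@[simp] theorem inv_b (x : N3) : (x⁻¹).b = -x.b := rfl
@[simp] theorem inv_c (x : N3) : (x⁻¹).c = x.a * x.b - x.c := rfl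
@[simp] theorem inv_d (x : N3) : (x⁻¹).d = -x.d + x.a * x.e - x.a * x.b ^ 2 + x.c * x.b := rfl
@[simp] theorem inv_e (x : N3) : (x⁻¹).e = x.b ^ 2 - x.e := rfl

instance : Group N3 where
  mul_assoc x y z := by ext <;> simp <;> ring
  one_mul x := by ext <;> simp
  mul_one x := by ext <;> simp
  inv_mul_cancel x := by ext <;> simp <;> ring

end N3

namespace N3

theorem mem_center (z : N3) (h1 : z.a = 0) (h2 : z.b = 0) (h3 : z.c = 0) (h5 : z.e = 0) :
    z ∈ Subgroup.center N3 := by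
  rw [Subgroup.mem_center_iff]
  intro g
  ext <;> simp [h1, h2, h3, h5] <;> ring

/-- The subgroup of elements with vanishing `a` and `b` coordinates. -/
def H1 : Subgroup N3 where
  carrier := {x | x.a = 0 ∧ x.b = 0}
  mul_mem' := by rintro x y ⟨hx1, hx2⟩ ⟨hy1, hy2⟩; constructor <;> simp_all
  one_mem' := ⟨rfl, rfl⟩
  inv_mem' := by rintro x ⟨h1, h2⟩; constructor <;> simp_all

theorem lcs1_le : (⊤ : Subgroup N3).lowerCentralSeries 1 ≤ H1 := by
  rw [Subgroup.lowerCentralSeries_succ]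
  apply Subgroup.closure_le H1 |>.2
  rintro x ⟨p, -, q, -, rfl⟩
  constructor <;> simp [commutatorElement_def] <;> ring

theorem lcs2_le_center : (⊤ : Subgroup N3).lowerCentralSeries 2 ≤ Subgroup.center N3 := by
  rw [Subgroup.lowerCentralSeries_succ]
  apply Subgroup.closure_le _ |>.2
  rintro x ⟨p, hp, q, -, rfl⟩
  obtain ⟨hp1, hp2⟩ := lcs1_le hp
  apply mem_center <;> simp [hp1, hp2, commutatorElement_def] <;> ring

theorem lcs3_eq_bot : (⊤ : Subgroup N3).lowerCentralSeries 3 = ⊥ := by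
  rw [eq_bot_iff, Subgroup.lowerCentralSeries_succ]
  apply Subgroup.closure_le _ |>.2
  rintro x ⟨p, hp, q, -, rfl⟩
  have := (Subgroup.mem_center_iff.1 (lcs2_le_center hp)) q
  simp [Subgroup.mem_bot, commutatorElement_def]
  rw [← this, mul_assoc, mul_assoc]
  simp [← mul_assoc]

/-- The two generators. -/
def X : N3 := ⟨1, 0, 0, 0, 0⟩
def Y : N3 := ⟨0, 1, 0, 0, 0⟩

theorem comm_ne_one : ⁅⁅X, Y⁆, Y⁆ ≠ 1 := by
  intro h
  have := congrArg N3.d h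
  simp [commutatorElement_def, X, Y] at this

end N3

theorem prod_ofFn_eq_of_support {M : Type*} [Monoid M] :
    ∀ {n : ℕ} (f : Fin n → M) (j : Fin n), (∀ i, i ≠ j → f i = 1) →
      (List.ofFn f).prod = f j := by
  intro n
  induction n with
  | zero => exact fun f j _ => j.elim0
  | succ n ih =>
    intro f j hj
    rw [List.ofFn_succ, List.prod_cons]
    induction j using Fin.cases with
    | zero =>
      have : (List.ofFn fun i : Fin n => f i.succ).prod = 1 := by
        apply List.prod_eq_one
        intro x hx
        rw [List.mem_ofFn] at hx
        obtain ⟨i, rfl⟩ := hx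
        exact hj i.succ (Fin.succ_ne_zero i)
      rw [this, mul_one]
    | succ k =>
      rw [hj 0 (Fin.succ_ne_zero k).symm, one_mul]
      exact ih (fun i => f i.succ) k fun i hi => hj i.succ (by simpa using hi)

/-- In the free group `F` on generators `a₁,…,a_g,b₁,…,b_g` (`g ≥ 1`),
the element `w = [[a₁,b₁][a₂,b₂]⋯[a_g,b_g], b_g]` lies in the third term `F₃`
of the lower central series (`= lowerCentralSeries F 2`) but not in the fourth
term `F₄` (`= lowerCentralSeries F 3`). -/
theorem boundary_twist_element_in_third_not_fourth_lcs
    (g : ℕ) (hg : 1 ≤ g)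
    (a b : Fin g → FreeGroup (Fin g ⊕ Fin g))
    (ha : ∀ i, a i = FreeGroup.of (Sum.inl i))
    (hb : ∀ i, b i = FreeGroup.of (Sum.inr i))
    (w : FreeGroup (Fin g ⊕ Fin g))
    (hw : w = ⁅(List.ofFn fun i => ⁅a i, b i⁆).prod, b ⟨g - 1, by omega⟩⁆) :
    w ∈ (⊤ : Subgroup (FreeGroup (Fin g ⊕ Fin g))).lowerCentralSeries 2 ∧
      w ∉ (⊤ : Subgroup (FreeGroup (Fin g ⊕ Fin g))).lowerCentralSeries 3 := by
  constructor
  · -- membership in LCS 2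
    show w ∈ ⁅(⊤ : Subgroup (FreeGroup (Fin g ⊕ Fin g))).lowerCentralSeries 1, ⊤⁆
    rw [hw]
    apply Subgroup.commutator_mem_commutator _ (Subgroup.mem_top _)
    show _ ∈ ⁅(⊤ : Subgroup (FreeGroup (Fin g ⊕ Fin g))), ⊤⁆
    apply Subgroup.list_prod_mem
    intro x hx
    rw [List.mem_ofFn] at hx
    obtain ⟨i, rfl⟩ := hx
    exact Subgroup.commutator_mem_commutator (Subgroup.mem_top _) (Subgroup.mem_top _)
  · -- not in LCS 3
    intro hmem
    set j : Fin g := ⟨g - 1, by omega⟩ with hj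
    set f : (Fin g ⊕ Fin g) → N3 := fun s =>
      match s with
      | Sum.inl i => if i = j then N3.X else 1
      | Sum.inr i => if i = j then N3.Y else 1 with hf
    set φ : FreeGroup (Fin g ⊕ Fin g) →* N3 := FreeGroup.lift f with hφ
    have hφa : ∀ i, φ (a i) = if i = j then N3.X else 1 := by
      intro i; rw [ha]; exact FreeGroup.lift_apply_of
    have hφb : ∀ i, φ (b i) = if i = j then N3.Y else 1 := by
      intro i; rw [hb]; exact FreeGroup.lift_apply_of
    have hφw : φ w = ⁅⁅N3.X, N3.Y⁆, N3.Y⁆ := by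
      rw [hw, map_commutatorElement, map_list_prod, List.map_ofFn]
      have key : (List.ofFn fun i => φ ⁅a i, b i⁆).prod = ⁅N3.X, N3.Y⁆ := by
        rw [prod_ofFn_eq_of_support _ j]
        · rw [map_commutatorElement, hφa, hφb, if_pos rfl, if_pos rfl]
        · intro i hi
          rw [map_commutatorElement, hφa, hφb, if_neg hi, if_neg hi]
          simp
      simp only [Function.comp_def] at key ⊢
      rw [key, hφb, if_pos rfl]
    have hmap : φ w ∈ (⊤ : Subgroup N3).lowerCentralSeries 3 :=
      Subgroup.lowerCentralSeries.map φ 3 ⟨w, hmem, rfl⟩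
    rw [N3.lcs3_eq_bot, Subgroup.mem_bot, hφw] at hmap
    exact N3.comm_ne_one hmap
end

section
/- (Falk–Randell) Let 1 → A → B → C → 1 be a split short exact sequence of groups; regard A as a normal subgroup of B and C (via the splitting) as a subgroup of B. Assume [C, A] ⊆ [A, A]. Then for every k ≥ 1 there is a short exact sequence of abelian groups 1 → A_k/A_{k+1} → B_k/B_{k+1} → C_k/C_{k+1} → 1, where the first map is induced by the inclusion A → B and the second by the projection B → C: the induced map A_k/A_{k+1} → B_k/B_{k+1} is injective, the induced map B_k/B_{k+1} → C_k/C_{k+1} is surjective, and the image of the first equals the kernel of the second. -/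
open Subgroup Pointwise
open scoped commutatorElement

/-- Three subgroups lemma with a normal target subgroup. -/
lemma FR.three_sub {G : Type*} [Group G] {H₁ H₂ H₃ N : Subgroup G} [hN : N.Normal]
    (h1 : ⁅⁅H₂, H₃⁆, H₁⁆ ≤ N) (h2 : ⁅⁅H₃, H₁⁆, H₂⁆ ≤ N) : ⁅⁅H₁, H₂⁆, H₃⁆ ≤ N := by
  have key : ∀ {K : Subgroup G}, K ≤ N ↔ Subgroup.map (QuotientGroup.mk' N) K = ⊥ := by
    intro K
    rw [Subgroup.map_eq_bot_iff, QuotientGroup.ker_mk']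
  rw [key, Subgroup.map_commutator, Subgroup.map_commutator] at h1 h2 ⊢
  exact Subgroup.commutator_commutator_eq_bot_of_rotate h1 h2

lemma FR.lcs_comm {G : Type*} [Group G] :
    ∀ i j, ⁅Subgroup.lowerCentralSeries (⊤ : Subgroup G) i, Subgroup.lowerCentralSeries (⊤ : Subgroup G) j⁆ ≤ Subgroup.lowerCentralSeries (⊤ : Subgroup G) (i + j + 1) := by
  intro i
  induction i with
  | zero =>
    intro j
    rw [Subgroup.lowerCentralSeries_zero, Subgroup.commutator_comm, Nat.zero_add]
    exact le_of_eq rfl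
  | succ i ih =>
    intro j
    show ⁅⁅Subgroup.lowerCentralSeries (⊤ : Subgroup G) i, ⊤⁆, Subgroup.lowerCentralSeries (⊤ : Subgroup G) j⁆ ≤ _
    apply FR.three_sub
    · calc ⁅⁅(⊤ : Subgroup G), Subgroup.lowerCentralSeries (⊤ : Subgroup G) j⁆, Subgroup.lowerCentralSeries (⊤ : Subgroup G) i⁆
          = ⁅⁅Subgroup.lowerCentralSeries (⊤ : Subgroup G) j, ⊤⁆, Subgroup.lowerCentralSeries (⊤ : Subgroup G) i⁆ := by
            rw [Subgroup.commutator_comm (⊤ : Subgroup G)]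
        _ = ⁅Subgroup.lowerCentralSeries (⊤ : Subgroup G) i, Subgroup.lowerCentralSeries (⊤ : Subgroup G) (j+1)⁆ := by
            rw [Subgroup.commutator_comm]
            rfl
        _ ≤ Subgroup.lowerCentralSeries (⊤ : Subgroup G) (i + (j+1) + 1) := ih (j+1)
        _ = Subgroup.lowerCentralSeries (⊤ : Subgroup G) (i + 1 + j + 1) := by ring_nf
    · calc ⁅⁅Subgroup.lowerCentralSeries (⊤ : Subgroup G) j, Subgroup.lowerCentralSeries (⊤ : Subgroup G) i⁆, (⊤ : Subgroup G)⁆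
          ≤ ⁅Subgroup.lowerCentralSeries (⊤ : Subgroup G) (i + j + 1), ⊤⁆ := by
            apply Subgroup.commutator_mono _ le_rfl
            rw [Subgroup.commutator_comm]; exact ih j
        _ = Subgroup.lowerCentralSeries (⊤ : Subgroup G) (i + j + 2) := rfl
        _ = Subgroup.lowerCentralSeries (⊤ : Subgroup G) (i + 1 + j + 1) := by ring_nf

section FR

variable {A B C : Type*} [Group A] [Group B] [Group C]
    (ι : A →* B) (π : B →* C) (s : C →* B)

lemma FR.hA0 : Subgroup.map ι (Subgroup.lowerCentralSeries (⊤ : Subgroup A) 0) = ι.range := by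
  rw [Subgroup.lowerCentralSeries_zero, ← MonoidHom.range_eq_map]

lemma FR.hAsucc (n : ℕ) : Subgroup.map ι (Subgroup.lowerCentralSeries (⊤ : Subgroup A) (n+1))
    = ⁅Subgroup.map ι (Subgroup.lowerCentralSeries (⊤ : Subgroup A) n), ι.range⁆ := by
  rw [show Subgroup.lowerCentralSeries (⊤ : Subgroup A) (n+1) = ⁅Subgroup.lowerCentralSeries (⊤ : Subgroup A) n, ⊤⁆ from rfl,
    Subgroup.map_commutator, ← MonoidHom.range_eq_map]

variable (hrange : ι.range = π.ker)

include hrange in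
lemma FR.hNorm (n : ℕ) : (Subgroup.map ι (Subgroup.lowerCentralSeries (⊤ : Subgroup A) n)).Normal := by
  have h0 : (ι.range).Normal := by rw [hrange]; exact π.normal_ker
  induction n with
  | zero => rw [FR.hA0]; exact h0
  | succ n ih =>
    rw [FR.hAsucc]
    exact @Subgroup.commutator_normal _ _ _ _ ih h0

variable (hCA : ⁅s.range, ι.range⁆ ≤ ⁅ι.range, ι.range⁆)

include hrange hCA in
lemma FR.hR (n : ℕ) : ⁅s.range, Subgroup.map ι (Subgroup.lowerCentralSeries (⊤ : Subgroup A) n)⁆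
    ≤ Subgroup.map ι (Subgroup.lowerCentralSeries (⊤ : Subgroup A) (n+1)) := by
  induction n with
  | zero =>
    rw [FR.hA0, FR.hAsucc, FR.hA0]
    exact hCA
  | succ n ih =>
    rw [FR.hAsucc ι n, Subgroup.commutator_comm]
    haveI := FR.hNorm ι π hrange (n+2)
    apply FR.three_sub
    · calc ⁅⁅ι.range, s.range⁆, Subgroup.map ι (Subgroup.lowerCentralSeries (⊤ : Subgroup A) n)⁆
          ≤ ⁅Subgroup.map ι (Subgroup.lowerCentralSeries (⊤ : Subgroup A) 1), Subgroup.map ι (Subgroup.lowerCentralSeries (⊤ : Subgroup A) n)⁆ := by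
            apply Subgroup.commutator_mono _ le_rfl
            rw [Subgroup.commutator_comm]
            calc ⁅s.range, ι.range⁆ ≤ ⁅ι.range, ι.range⁆ := hCA
              _ = Subgroup.map ι (Subgroup.lowerCentralSeries (⊤ : Subgroup A) 1) := by rw [FR.hAsucc, FR.hA0]
        _ = Subgroup.map ι ⁅Subgroup.lowerCentralSeries (⊤ : Subgroup A) 1, Subgroup.lowerCentralSeries (⊤ : Subgroup A) n⁆ := by
            rw [Subgroup.map_commutator]
        _ ≤ Subgroup.map ι (Subgroup.lowerCentralSeries (⊤ : Subgroup A) (n+2)) := by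
            apply Subgroup.map_mono
            have := FR.lcs_comm (G := A) 1 n
            calc ⁅Subgroup.lowerCentralSeries (⊤ : Subgroup A) 1, Subgroup.lowerCentralSeries (⊤ : Subgroup A) n⁆
                ≤ Subgroup.lowerCentralSeries (⊤ : Subgroup A) (1 + n + 1) := this
              _ = Subgroup.lowerCentralSeries (⊤ : Subgroup A) (n + 2) := by ring_nf
    · calc ⁅⁅s.range, Subgroup.map ι (Subgroup.lowerCentralSeries (⊤ : Subgroup A) n)⁆, ι.range⁆
          ≤ ⁅Subgroup.map ι (Subgroup.lowerCentralSeries (⊤ : Subgroup A) (n+1)), ι.range⁆ :=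
            Subgroup.commutator_mono ih le_rfl
        _ = Subgroup.map ι (Subgroup.lowerCentralSeries (⊤ : Subgroup A) (n+2)) := (FR.hAsucc ι (n+1)).symm

include hrange hCA in
lemma FR.hT (n m : ℕ) : ⁅Subgroup.map s (Subgroup.lowerCentralSeries (⊤ : Subgroup C) n),
      Subgroup.map ι (Subgroup.lowerCentralSeries (⊤ : Subgroup A) m)⁆
    ≤ Subgroup.map ι (Subgroup.lowerCentralSeries (⊤ : Subgroup A) (n + m + 1)) := by
  induction n generalizing m with
  | zero =>
    rw [FR.hA0 s, Nat.zero_add]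
    exact FR.hR ι π s hrange hCA m
  | succ n ih =>
    rw [show Subgroup.map s (Subgroup.lowerCentralSeries (⊤ : Subgroup C) (n+1))
        = ⁅Subgroup.map s (Subgroup.lowerCentralSeries (⊤ : Subgroup C) n), s.range⁆ from FR.hAsucc s n]
    haveI := FR.hNorm ι π hrange (n + 1 + m + 1)
    apply FR.three_sub
    · calc ⁅⁅s.range, Subgroup.map ι (Subgroup.lowerCentralSeries (⊤ : Subgroup A) m)⁆,
            Subgroup.map s (Subgroup.lowerCentralSeries (⊤ : Subgroup C) n)⁆
          ≤ ⁅Subgroup.map ι (Subgroup.lowerCentralSeries (⊤ : Subgroup A) (m+1)),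
            Subgroup.map s (Subgroup.lowerCentralSeries (⊤ : Subgroup C) n)⁆ :=
            Subgroup.commutator_mono (FR.hR ι π s hrange hCA m) le_rfl
        _ = ⁅Subgroup.map s (Subgroup.lowerCentralSeries (⊤ : Subgroup C) n),
            Subgroup.map ι (Subgroup.lowerCentralSeries (⊤ : Subgroup A) (m+1))⁆ := Subgroup.commutator_comm _ _
        _ ≤ Subgroup.map ι (Subgroup.lowerCentralSeries (⊤ : Subgroup A) (n + (m+1) + 1)) := ih (m+1)
        _ = Subgroup.map ι (Subgroup.lowerCentralSeries (⊤ : Subgroup A) (n + 1 + m + 1)) := by ring_nf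
    · calc ⁅⁅Subgroup.map ι (Subgroup.lowerCentralSeries (⊤ : Subgroup A) m),
            Subgroup.map s (Subgroup.lowerCentralSeries (⊤ : Subgroup C) n)⁆, s.range⁆
          = ⁅⁅Subgroup.map s (Subgroup.lowerCentralSeries (⊤ : Subgroup C) n),
            Subgroup.map ι (Subgroup.lowerCentralSeries (⊤ : Subgroup A) m)⁆, s.range⁆ := by
            rw [Subgroup.commutator_comm (Subgroup.map ι (Subgroup.lowerCentralSeries (⊤ : Subgroup A) m))]
        _ ≤ ⁅Subgroup.map ι (Subgroup.lowerCentralSeries (⊤ : Subgroup A) (n + m + 1)), s.range⁆ :=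
            Subgroup.commutator_mono (ih m) le_rfl
        _ = ⁅s.range, Subgroup.map ι (Subgroup.lowerCentralSeries (⊤ : Subgroup A) (n + m + 1))⁆ :=
            Subgroup.commutator_comm _ _
        _ ≤ Subgroup.map ι (Subgroup.lowerCentralSeries (⊤ : Subgroup A) (n + m + 2)) :=
            FR.hR ι π s hrange hCA (n + m + 1)
        _ = Subgroup.map ι (Subgroup.lowerCentralSeries (⊤ : Subgroup A) (n + 1 + m + 1)) := by ring_nf

variable (hs : π.comp s = MonoidHom.id C)

include hs in
lemma FR.hπs (c : C) : π (s c) = c := by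
  have := DFunLike.congr_fun hs c
  simpa using this

include hrange hs in
lemma FR.dec0 (b : B) : ∃ a c, b = ι a * s c := by
  have h1 : b * (s (π b))⁻¹ ∈ π.ker := by
    rw [MonoidHom.mem_ker, map_mul, map_inv, FR.hπs π s hs]
    group
  rw [← hrange] at h1
  obtain ⟨a, ha⟩ := h1
  exact ⟨a, π b, by rw [ha]; group⟩

include hrange hCA hs in
lemma FR.topA (n : ℕ) : ⁅(⊤ : Subgroup B), Subgroup.map ι (Subgroup.lowerCentralSeries (⊤ : Subgroup A) n)⁆
    ≤ Subgroup.map ι (Subgroup.lowerCentralSeries (⊤ : Subgroup A) (n+1)) := by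
  rw [Subgroup.commutator_le]
  intro g _ x hx
  obtain ⟨a₀, c₀, rfl⟩ := FR.dec0 ι π s hrange hs g
  have heq : ⁅ι a₀ * s c₀, x⁆ = (ι a₀) * ⁅s c₀, x⁆ * (ι a₀)⁻¹ * ⁅ι a₀, x⁆ := by group
  rw [heq]
  have h1 : ⁅s c₀, x⁆ ∈ Subgroup.map ι (Subgroup.lowerCentralSeries (⊤ : Subgroup A) (n+1)) :=
    FR.hR ι π s hrange hCA n (commutator_mem_commutator ⟨c₀, rfl⟩ hx)
  have h2 : ⁅ι a₀, x⁆ ∈ Subgroup.map ι (Subgroup.lowerCentralSeries (⊤ : Subgroup A) (n+1)) := by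
    have h3 : ⁅ι a₀, x⁆ ∈ ⁅ι.range, Subgroup.map ι (Subgroup.lowerCentralSeries (⊤ : Subgroup A) n)⁆ :=
      commutator_mem_commutator ⟨a₀, rfl⟩ hx
    rwa [Subgroup.commutator_comm, ← FR.hAsucc] at h3
  exact mul_mem ((FR.hNorm ι π hrange (n+1)).conj_mem _ h1 (ι a₀)) h2

include hrange hCA hs in
lemma FR.bc (n : ℕ) (b : B) (c : C) (hc : c ∈ Subgroup.lowerCentralSeries (⊤ : Subgroup C) n) :
    ⁅b, s c⁆ ∈ Subgroup.map ι (Subgroup.lowerCentralSeries (⊤ : Subgroup A) (n+1))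
      ⊔ Subgroup.map s (Subgroup.lowerCentralSeries (⊤ : Subgroup C) (n+1)) := by
  obtain ⟨a₀, c₀, rfl⟩ := FR.dec0 ι π s hrange hs b
  have heq : ⁅ι a₀ * s c₀, s c⁆
      = (⁅ι a₀, ⁅s c₀, s c⁆⁆ * ⁅s c₀, s c⁆) * ⁅ι a₀, s c⁆ := by group
  rw [heq]
  have hz : ⁅s c₀, s c⁆ ∈ Subgroup.map s (Subgroup.lowerCentralSeries (⊤ : Subgroup C) (n+1)) := by
    have h' : ⁅c₀, c⁆ ∈ Subgroup.lowerCentralSeries (⊤ : Subgroup C) (n+1) := by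
      have h'' : ⁅c, c₀⁆ ∈ ⁅Subgroup.lowerCentralSeries (⊤ : Subgroup C) n, ⊤⁆ :=
        commutator_mem_commutator hc (mem_top c₀)
      rw [show ⁅c₀, c⁆ = ⁅c, c₀⁆⁻¹ from (commutatorElement_inv c c₀).symm]
      exact inv_mem h''
    exact ⟨⁅c₀, c⁆, h', map_commutatorElement s c₀ c⟩
  have h3 : ⁅ι a₀, ⁅s c₀, s c⁆⁆ ∈ Subgroup.map ι (Subgroup.lowerCentralSeries (⊤ : Subgroup A) (n+1)) := by
    have h4 : ⁅⁅s c₀, s c⁆, ι a₀⁆ ∈ ⁅Subgroup.map s (Subgroup.lowerCentralSeries (⊤ : Subgroup C) (n+1)),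
        Subgroup.map ι (Subgroup.lowerCentralSeries (⊤ : Subgroup A) 0)⁆ :=
      commutator_mem_commutator hz (by rw [FR.hA0]; exact ⟨a₀, rfl⟩)
    have h5 : ⁅⁅s c₀, s c⁆, ι a₀⁆ ∈ Subgroup.map ι (Subgroup.lowerCentralSeries (⊤ : Subgroup A) (n+2)) :=
      FR.hT ι π s hrange hCA (n+1) 0 h4
    have h6 : Subgroup.map ι (Subgroup.lowerCentralSeries (⊤ : Subgroup A) (n+2))
        ≤ Subgroup.map ι (Subgroup.lowerCentralSeries (⊤ : Subgroup A) (n+1)) :=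
      Subgroup.map_mono (Subgroup.lowerCentralSeries_antitone (S := ⊤) (Nat.le_succ _))
    rw [show ⁅ι a₀, ⁅s c₀, s c⁆⁆ = ⁅⁅s c₀, s c⁆, ι a₀⁆⁻¹ from
      (commutatorElement_inv _ _).symm]
    exact inv_mem (h6 h5)
  have h7 : ⁅ι a₀, s c⁆ ∈ Subgroup.map ι (Subgroup.lowerCentralSeries (⊤ : Subgroup A) (n+1)) := by
    have h8 : ⁅s c, ι a₀⁆ ∈ ⁅Subgroup.map s (Subgroup.lowerCentralSeries (⊤ : Subgroup C) n),
        Subgroup.map ι (Subgroup.lowerCentralSeries (⊤ : Subgroup A) 0)⁆ :=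
      commutator_mem_commutator ⟨c, hc, rfl⟩ (by rw [FR.hA0]; exact ⟨a₀, rfl⟩)
    have h9 := FR.hT ι π s hrange hCA n 0 h8
    rw [show ⁅ι a₀, s c⁆ = ⁅s c, ι a₀⁆⁻¹ from (commutatorElement_inv _ _).symm]
    exact inv_mem h9
  exact mul_mem (mul_mem (Subgroup.mem_sup_left h3) (Subgroup.mem_sup_right hz))
    (Subgroup.mem_sup_left h7)

include hrange hCA hs in
lemma FR.le (n : ℕ) : Subgroup.lowerCentralSeries (⊤ : Subgroup B) n
    ≤ Subgroup.map ι (Subgroup.lowerCentralSeries (⊤ : Subgroup A) n) ⊔ Subgroup.map s (Subgroup.lowerCentralSeries (⊤ : Subgroup C) n) := by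
  induction n with
  | zero =>
    intro b _
    obtain ⟨a, c, rfl⟩ := FR.dec0 ι π s hrange hs b
    exact mul_mem (Subgroup.mem_sup_left ⟨a, mem_top a, rfl⟩)
      (Subgroup.mem_sup_right ⟨c, mem_top c, rfl⟩)
  | succ n ih =>
    show ⁅Subgroup.lowerCentralSeries (⊤ : Subgroup B) n, ⊤⁆ ≤ _
    rw [Subgroup.commutator_le]
    intro x hx g _
    have hx' : x ∈ Subgroup.map ι (Subgroup.lowerCentralSeries (⊤ : Subgroup A) n)
        ⊔ Subgroup.map s (Subgroup.lowerCentralSeries (⊤ : Subgroup C) n) := ih hx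
    haveI := FR.hNorm ι π hrange n
    have hx'' : x ∈ (Subgroup.map ι (Subgroup.lowerCentralSeries (⊤ : Subgroup A) n) : Set B)
        * (Subgroup.map s (Subgroup.lowerCentralSeries (⊤ : Subgroup C) n) : Set B) := by
      rw [← Subgroup.normal_mul]; exact hx'
    obtain ⟨y, hy, z, hz, rfl⟩ := hx''
    obtain ⟨a, ha, rfl⟩ := hy
    obtain ⟨c, hc, rfl⟩ := hz
    rw [show ⁅ι a * s c, g⁆ = ⁅g, ι a * s c⁆⁻¹ from (commutatorElement_inv _ _).symm]
    apply inv_mem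
    have heq : ⁅g, ι a * s c⁆
        = ⁅g, ι a⁆ * (⁅ι a, ⁅g, s c⁆⁆ * ⁅g, s c⁆) := by group
    rw [heq]
    have h1 : ⁅g, ι a⁆ ∈ Subgroup.map ι (Subgroup.lowerCentralSeries (⊤ : Subgroup A) (n+1)) :=
      FR.topA ι π s hrange hCA hs n (commutator_mem_commutator (mem_top g) ⟨a, ha, rfl⟩)
    have h2 := FR.bc ι π s hrange hCA hs n g c hc
    have h4 : ⁅ι a, ⁅g, s c⁆⁆ ∈ Subgroup.map ι (Subgroup.lowerCentralSeries (⊤ : Subgroup A) (n+1)) := by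
      have h5 : ⁅⁅g, s c⁆, ι a⁆ ∈ ⁅(⊤ : Subgroup B), Subgroup.map ι (Subgroup.lowerCentralSeries (⊤ : Subgroup A) n)⁆ :=
        commutator_mem_commutator (mem_top _) ⟨a, ha, rfl⟩
      rw [show ⁅ι a, ⁅g, s c⁆⁆ = ⁅⁅g, s c⁆, ι a⁆⁻¹ from (commutatorElement_inv _ _).symm]
      exact inv_mem (FR.topA ι π s hrange hCA hs n h5)
    exact mul_mem (Subgroup.mem_sup_left h1)
      (mul_mem (Subgroup.mem_sup_left h4) h2)

include hrange hCA hs in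
lemma FR.main (n : ℕ) (b : B) (hb : b ∈ Subgroup.lowerCentralSeries (⊤ : Subgroup B) n) :
    ∃ a ∈ Subgroup.lowerCentralSeries (⊤ : Subgroup A) n, ∃ c ∈ Subgroup.lowerCentralSeries (⊤ : Subgroup C) n, b = ι a * s c := by
  haveI := FR.hNorm ι π hrange n
  have h : b ∈ (Subgroup.map ι (Subgroup.lowerCentralSeries (⊤ : Subgroup A) n) : Set B)
      * (Subgroup.map s (Subgroup.lowerCentralSeries (⊤ : Subgroup C) n) : Set B) := by
    rw [← Subgroup.normal_mul]; exact FR.le ι π s hrange hCA hs n hb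
  obtain ⟨y, hy, z, hz, rfl⟩ := h
  obtain ⟨a, ha, rfl⟩ := hy
  obtain ⟨c, hc, rfl⟩ := hz
  exact ⟨a, ha, c, hc, rfl⟩

end FR

/-- Falk–Randell: Let `1 → A → B → C → 1` be a split short exact
sequence of groups (inclusion `ι`, projection `π`, section `s`), with
`[C, A] ⊆ [A, A]` inside `B`. Then for every `k ≥ 1` (with
`G_k = Subgroup.lowerCentralSeries (⊤ : Subgroup G) (k-1)`) the induced sequence
`1 → A_k/A_{k+1} → B_k/B_{k+1} → C_k/C_{k+1} → 1` is exact: the map induced by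
`ι` is injective, the map induced by `π` is surjective, and the image of the
former equals the kernel of the latter. -/
theorem falk_randell_lcs_exact
    {A B C : Type*} [Group A] [Group B] [Group C]
    (ι : A →* B) (π : B →* C) (s : C →* B)
    (hι : Function.Injective ι)
    (hrange : ι.range = π.ker)
    (hs : π.comp s = MonoidHom.id C)
    (hCA : ⁅s.range, ι.range⁆ ≤ ⁅ι.range, ι.range⁆)
    (k : ℕ) (hk : 1 ≤ k) :
    (∀ a ∈ (⊤ : Subgroup A).lowerCentralSeries (k - 1),
        ι a ∈ (⊤ : Subgroup B).lowerCentralSeries k → a ∈ (⊤ : Subgroup A).lowerCentralSeries k) ∧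
    (∀ c ∈ (⊤ : Subgroup C).lowerCentralSeries (k - 1),
        ∃ b ∈ (⊤ : Subgroup B).lowerCentralSeries (k - 1), π b * c⁻¹ ∈ (⊤ : Subgroup C).lowerCentralSeries k) ∧
    (∀ b ∈ (⊤ : Subgroup B).lowerCentralSeries (k - 1),
        (π b ∈ (⊤ : Subgroup C).lowerCentralSeries k ↔
          ∃ a ∈ (⊤ : Subgroup A).lowerCentralSeries (k - 1), ι a * b⁻¹ ∈ (⊤ : Subgroup B).lowerCentralSeries k)) := by
  obtain ⟨m, rfl⟩ : ∃ m, k = m + 1 := ⟨k - 1, by omega⟩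
  simp only [Nat.add_sub_cancel]
  have hπι : ∀ a : A, π (ι a) = 1 := by
    intro a
    have : ι a ∈ π.ker := hrange ▸ ⟨a, rfl⟩
    rwa [MonoidHom.mem_ker] at this
  have hπs := FR.hπs π s hs
  refine ⟨?_, ?_, ?_⟩
  · intro a _ hb
    obtain ⟨a', ha', c', hc', heq⟩ := FR.main ι π s hrange hCA hs (m+1) (ι a) hb
    have hc1 : c' = 1 := by
      have h := congrArg π heq
      rw [hπι, map_mul, hπι, hπs, one_mul] at h
      exact h.symm
    rw [hc1, map_one, mul_one] at heq
    rw [hι heq]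
    exact ha'
  · intro c hc
    refine ⟨s c, Subgroup.lowerCentralSeries.map s m (Subgroup.mem_map_of_mem s hc), ?_⟩
    rw [hπs, mul_inv_cancel]
    exact one_mem _
  · intro b hb
    constructor
    · intro hπb
      obtain ⟨a, ha, c, hc, rfl⟩ := FR.main ι π s hrange hCA hs m b hb
      refine ⟨a, ha, ?_⟩
      have hcmem : c ∈ Subgroup.lowerCentralSeries (⊤ : Subgroup C) (m+1) := by
        have h : π (ι a * s c) = c := by rw [map_mul, hπι, hπs, one_mul]
        rwa [h] at hπb
      have h1 : s c⁻¹ ∈ Subgroup.lowerCentralSeries (⊤ : Subgroup B) (m+1) :=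
        Subgroup.lowerCentralSeries.map s (m+1) (Subgroup.mem_map_of_mem s (inv_mem hcmem))
      have heq : ι a * (ι a * s c)⁻¹ = (ι a) * (s c⁻¹) * (ι a)⁻¹ := by
        rw [map_inv]; group
      rw [heq]
      exact (Subgroup.lowerCentralSeries_normal ⊤ (m+1)).conj_mem _ h1 (ι a)
    · rintro ⟨a, _, hab⟩
      have h1 : π (ι a * b⁻¹) ∈ Subgroup.lowerCentralSeries (⊤ : Subgroup C) (m+1) :=
        Subgroup.lowerCentralSeries.map π (m+1) (Subgroup.mem_map_of_mem π hab)
      rw [map_mul, hπι, one_mul, map_inv] at h1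
      exact inv_mem_iff.mp h1
end

section
/- For all integers k ≥ 2 and m ≥ 2, the Witt numbers satisfy C(k+1, m) ≥ C(k, m). -/
open ArithmeticFunction Finset

private lemma mu1 : (moebius 1 : ℤ) = 1 := by simp
private lemma mu2 : (moebius 2 : ℤ) = -1 := moebius_apply_prime (by norm_num)
private lemma mu3 : (moebius 3 : ℤ) = -1 := moebius_apply_prime (by norm_num)
private lemma mu4 : (moebius 4 : ℤ) = 0 := by
  rw [show (4:ℕ) = 2^2 by norm_num, moebius_apply_prime_pow (by norm_num) (by norm_num)]
  norm_num
private lemma mu5 : (moebius 5 : ℤ) = -1 := moebius_apply_prime (by norm_num)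
private lemma mu6 : (moebius 6 : ℤ) = 1 := by
  rw [show (6:ℕ) = 2*3 by norm_num, isMultiplicative_moebius.map_mul_of_coprime (by norm_num),
    moebius_apply_prime (by norm_num), moebius_apply_prime (by norm_num)]
  norm_num

private lemma abs_mu_le (d : ℕ) : |(moebius d : ℚ)| ≤ 1 := by
  by_cases h : Squarefree d
  · rw [moebius_apply_of_squarefree h]
    push_cast
    rw [abs_pow, abs_neg, abs_one, one_pow]
  · rw [moebius_eq_zero_of_not_squarefree h]
    norm_num

private lemma geomSumLe (g : ℚ) (hg : 2 ≤ g) (n : ℕ) :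
    ∑ j ∈ Finset.Icc 1 n, g ^ j ≤ 2 * g ^ n := by
  induction n with
  | zero => simp
  | succ n ih =>
    rw [Finset.sum_Icc_succ_top (by omega)]
    have hgn : (0:ℚ) ≤ g ^ n := by positivity
    have hp : g ^ (n+1) = g * g ^ n := by ring
    nlinarith

private lemma err_bound (g : ℚ) (hg : 2 ≤ g) (k : ℕ) (hk : 1 ≤ k) :
    |(∑ d ∈ k.divisors, (moebius d : ℚ) * g ^ (k / d)) - g ^ k| ≤ 2 * g ^ (k / 2) := by
  have hk0 : k ≠ 0 := by omega
  have h1 : (1:ℕ) ∈ k.divisors := Nat.one_mem_divisors.mpr hk0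
  have hsplit : ∑ d ∈ k.divisors, (moebius d : ℚ) * g ^ (k / d)
      = (moebius 1 : ℚ) * g ^ (k / 1)
        + ∑ d ∈ k.divisors.erase 1, (moebius d : ℚ) * g ^ (k / d) :=
    (Finset.add_sum_erase _ _ h1).symm
  have hmu1 : (moebius 1 : ℚ) * g ^ (k / 1) = g ^ k := by simp
  rw [hsplit, hmu1, add_sub_cancel_left]
  have step1 : |∑ d ∈ k.divisors.erase 1, (moebius d : ℚ) * g ^ (k / d)|
      ≤ ∑ d ∈ k.divisors.erase 1, g ^ (k / d) := by
    refine (Finset.abs_sum_le_sum_abs _ _).trans (Finset.sum_le_sum ?_)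
    intro d _
    rw [abs_mul, abs_of_nonneg (by positivity : (0:ℚ) ≤ g ^ (k / d))]
    nlinarith [abs_mu_le d, pow_nonneg (by linarith : (0:ℚ) ≤ g) (k / d),
      abs_nonneg ((moebius d : ℚ))]
  have hinj : ∀ d ∈ k.divisors.erase 1, ∀ e ∈ k.divisors.erase 1,
      k / d = k / e → d = e := by
    intro d hd e he hde
    have hd' : d ∣ k := Nat.dvd_of_mem_divisors (Finset.mem_of_mem_erase hd)
    have he' : e ∣ k := Nat.dvd_of_mem_divisors (Finset.mem_of_mem_erase he)
    have h1' : k / (k / d) = d := Nat.div_div_self hd' hk0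
    have h2' : k / (k / e) = e := Nat.div_div_self he' hk0
    rw [← h1', ← h2', hde]
  have himg : ∑ d ∈ k.divisors.erase 1, g ^ (k / d)
      = ∑ j ∈ (k.divisors.erase 1).image (fun d => k / d), g ^ j :=
    (Finset.sum_image hinj).symm
  have step2 : ∑ j ∈ (k.divisors.erase 1).image (fun d => k / d), g ^ j
      ≤ ∑ j ∈ Finset.Icc 1 (k / 2), g ^ j := by
    refine Finset.sum_le_sum_of_subset_of_nonneg ?_ (fun j _ _ => by positivity)
    intro j hj
    simp only [Finset.mem_image] at hj
    obtain ⟨d, hd, rfl⟩ := hj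
    have hd1 : d ≠ 1 := Finset.ne_of_mem_erase hd
    have hd' : d ∣ k := Nat.dvd_of_mem_divisors (Finset.mem_of_mem_erase hd)
    have hdpos : 0 < d := Nat.pos_of_mem_divisors (Finset.mem_of_mem_erase hd)
    have hd2 : 2 ≤ d := by omega
    have hle : k / d ≤ k / 2 := Nat.div_le_div_left hd2 (by norm_num)
    have hge : 1 ≤ k / d := (Nat.one_le_div_iff hdpos).mpr (Nat.le_of_dvd (by omega) hd')
    exact Finset.mem_Icc.mpr ⟨hge, hle⟩
  calc |∑ d ∈ k.divisors.erase 1, (moebius d : ℚ) * g ^ (k / d)|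
      ≤ ∑ d ∈ k.divisors.erase 1, g ^ (k / d) := step1
    _ = ∑ j ∈ (k.divisors.erase 1).image (fun d => k / d), g ^ j := himg
    _ ≤ ∑ j ∈ Finset.Icc 1 (k / 2), g ^ j := step2
    _ ≤ 2 * g ^ (k / 2) := geomSumLe g hg _

private lemma two_pow_ge (a : ℕ) (ha : 3 ≤ a) : 2 * a + 2 ≤ 2 ^ a := by
  induction a with
  | zero => omega
  | succ n ih =>
    rcases Nat.lt_or_ge n 3 with h | h
    · interval_cases n <;> omega
    · have h1 := ih (by omega)
      have h2 : 2 ^ (n+1) = 2 * 2 ^ n := by ring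
      omega

/-- The Witt number `C(k,g) = (1/k) ∑_{d ∣ k} μ(d) g^(k/d)`, as a rational number. -/
noncomputable def wittNumber (k g : ℕ) : ℚ :=
  (1 / (k : ℚ)) * ∑ d ∈ k.divisors, (ArithmeticFunction.moebius d : ℚ) * (g : ℚ) ^ (k / d)

private lemma witt2 (m : ℕ) : wittNumber 2 m = (1/2) * ((m:ℚ)^2 - m) := by
  rw [wittNumber, show (2:ℕ).divisors = {1,2} from by decide,
    Finset.sum_insert (by decide), Finset.sum_singleton]
  push_cast [mu1, mu2]
  norm_num
  ring

private lemma witt3 (m : ℕ) : wittNumber 3 m = (1/3) * ((m:ℚ)^3 - m) := by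
  rw [wittNumber, show (3:ℕ).divisors = {1,3} from by decide,
    Finset.sum_insert (by decide), Finset.sum_singleton]
  push_cast [mu1, mu3]
  norm_num
  ring

private lemma witt4 (m : ℕ) : wittNumber 4 m = (1/4) * ((m:ℚ)^4 - (m:ℚ)^2) := by
  rw [wittNumber, show (4:ℕ).divisors = {1,2,4} from by decide,
    Finset.sum_insert (by decide), Finset.sum_insert (by decide), Finset.sum_singleton]
  push_cast [mu1, mu2, mu4]
  norm_num
  ring

private lemma witt5 (m : ℕ) : wittNumber 5 m = (1/5) * ((m:ℚ)^5 - m) := by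
  rw [wittNumber, show (5:ℕ).divisors = {1,5} from by decide,
    Finset.sum_insert (by decide), Finset.sum_singleton]
  push_cast [mu1, mu5]
  norm_num
  ring

private lemma witt6 (m : ℕ) : wittNumber 6 m = (1/6) * ((m:ℚ)^6 - (m:ℚ)^3 - (m:ℚ)^2 + m) := by
  rw [wittNumber, show (6:ℕ).divisors = {1,2,3,6} from by decide,
    Finset.sum_insert (by decide), Finset.sum_insert (by decide),
    Finset.sum_insert (by decide), Finset.sum_singleton]
  push_cast [mu1, mu2, mu3, mu6]
  norm_num
  ring

/-- For all integers `k ≥ 2` and `m ≥ 2`, `C(k+1, m) ≥ C(k, m)`. -/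
theorem wittNumber_succ_ge (k m : ℕ) (hk : 2 ≤ k) (hm : 2 ≤ m) :
    wittNumber k m ≤ wittNumber (k + 1) m := by
  have hg : (2:ℚ) ≤ (m:ℚ) := by exact_mod_cast hm
  have hg0 : (0:ℚ) < (m:ℚ) := by linarith
  rcases (by omega : k = 2 ∨ k = 3 ∨ k = 4 ∨ k = 5 ∨ 6 ≤ k) with rfl | rfl | rfl | rfl | h6
  · rw [witt2, show (2:ℕ)+1 = 3 from rfl, witt3]
    nlinarith [mul_nonneg (mul_nonneg hg0.le hg0.le) (by linarith : (0:ℚ) ≤ 2*(m:ℚ)-3),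
      hg0.le]
  · rw [witt3, show (3:ℕ)+1 = 4 from rfl, witt4]
    nlinarith [mul_nonneg (mul_nonneg (mul_nonneg hg0.le hg0.le) hg0.le)
      (by linarith : (0:ℚ) ≤ 3*(m:ℚ)-4), hg0.le, sq_nonneg ((m:ℚ))]
  · rw [witt4, show (4:ℕ)+1 = 5 from rfl, witt5]
    nlinarith [mul_nonneg (mul_nonneg (mul_nonneg (mul_nonneg hg0.le hg0.le) hg0.le) hg0.le)
      (by linarith : (0:ℚ) ≤ 4*(m:ℚ)-5), hg0.le, sq_nonneg ((m:ℚ))]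
  · rw [witt5, show (5:ℕ)+1 = 6 from rfl, witt6]
    have h1 : (0:ℚ) ≤ (m:ℚ)^5 * ((m:ℚ) - 2) := by
      apply mul_nonneg (by positivity) (by linarith)
    have h2 : (0:ℚ) ≤ (m:ℚ)^3 * ((m:ℚ)^2 - 4) := by
      apply mul_nonneg (by positivity) (by nlinarith)
    have h3 : (0:ℚ) ≤ (m:ℚ)^2 * ((m:ℚ) - 2) := by
      apply mul_nonneg (by positivity) (by linarith)
    nlinarith [h1, h2, h3, sq_nonneg ((m:ℚ)), hg0.le]
  · -- general case k ≥ 6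
    set g : ℚ := (m:ℚ) with hgdef
    have hK : (0:ℚ) < (k:ℚ) := by exact_mod_cast (by omega : 0 < k)
    have hK1 : (0:ℚ) < ((k+1:ℕ):ℚ) := by exact_mod_cast (by omega : 0 < k+1)
    rw [wittNumber, wittNumber, one_div_mul_eq_div, one_div_mul_eq_div,
      div_le_div_iff₀ hK hK1]
    have hb1 := abs_le.mp (err_bound g hg k (by omega))
    have hb2 := abs_le.mp (err_bound g hg (k+1) (by omega))
    set a := k / 2 with hadef
    set b := (k+1) / 2 with hbdef
    have hab : a + b = k := by omega
    have ha3 : 3 ≤ a := by omega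
    set A := g ^ a with hAdef
    set B := g ^ b with hBdef
    have hA0 : (0:ℚ) < A := by positivity
    have hB0 : (0:ℚ) < B := by positivity
    have hAK : (k:ℚ) + 1 ≤ A := by
      have hn : k + 1 ≤ 2 ^ a := le_trans (by omega) (two_pow_ge a ha3)
      have h2A : (2:ℚ) ^ a ≤ A := pow_le_pow_left₀ (by norm_num) hg a
      calc (k:ℚ) + 1 ≤ ((2^a : ℕ) : ℚ) := by exact_mod_cast hn
        _ = (2:ℚ) ^ a := by push_cast; ring
        _ ≤ A := h2A
    have hABle : A ≤ B := pow_le_pow_right₀ (by linarith : (1:ℚ) ≤ g) (by omega : a ≤ b)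
    have habk : A * B = g ^ k := by rw [← pow_add, hab]
    have hgs : g ^ (k+1) = g * (A * B) := by rw [habk]; ring
    have hk6 : (6:ℚ) ≤ (k:ℚ) := by exact_mod_cast h6
    have h1 : (0:ℚ) ≤ (g - 2) * (A * B * (k:ℚ)) := by
      apply mul_nonneg (by linarith)
      positivity
    have h2 : (0:ℚ) ≤ (A - ((k:ℚ)+1)) * (((k:ℚ)-1) * B) := by
      apply mul_nonneg (by linarith)
      apply mul_nonneg (by linarith) hB0.le
    have h3 : (0:ℚ) ≤ (B - A) * (2*(k:ℚ)+2) := by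
      apply mul_nonneg (by linarith) (by linarith)
    have h4 : (0:ℚ) ≤ ((k:ℚ)*(k:ℚ) - 4*(k:ℚ) - 3) * B := by
      apply mul_nonneg _ hB0.le
      nlinarith
    have key : (g ^ k + 2 * A) * ((k:ℚ)+1) ≤ (g ^ (k+1) - 2 * B) * (k:ℚ) := by
      rw [← habk, hgs]
      nlinarith [h1, h2, h3, h4]
    have s1 : (∑ d ∈ k.divisors, (moebius d : ℚ) * g ^ (k / d)) * ((k:ℚ)+1)
        ≤ (g ^ k + 2 * A) * ((k:ℚ)+1) :=
      mul_le_mul_of_nonneg_right (by linarith [hb1.2]) (by linarith)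
    have s2 : (g ^ (k+1) - 2 * B) * (k:ℚ)
        ≤ (∑ d ∈ (k+1).divisors, (moebius d : ℚ) * g ^ ((k+1) / d)) * (k:ℚ) :=
      mul_le_mul_of_nonneg_right (by linarith [hb2.1]) hK.le
    have hcast : ((k+1:ℕ):ℚ) = (k:ℚ) + 1 := by push_cast; ring
    rw [hcast]
    linarith
end
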